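/- If f and g are orientation-preserving homeomorphisms of the circle with a common invariant probability measure, g f g⁻¹ = f², and the pair generates a group preserving the measure, then f and g have a common fixed point on the circle. -/

import Mathlib

open Set AddCircle Filter Topology
noncomputable def picoord (β : ℝ) (x : AddCircle (1:ℝ)) : ℝ :=
  haveI : Fact ((0:ℝ) < 1) := ⟨one_pos⟩
  (AddCircle.equivIoc 1 β x : ℝ)

section helpers
variable {β : ℝ}
local instance : Fact ((0:ℝ) < 1) := ⟨one_pos⟩

lemma picoord_mem (x : AddCircle (1:ℝ)) : picoord β x ∈ Ioc β (β+1) :=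
  (AddCircle.equivIoc 1 β x).2

lemma coe_picoord (x : AddCircle (1:ℝ)) : ((picoord β x : ℝ) : AddCircle (1:ℝ)) = x := by
  have := (AddCircle.equivIoc 1 β).symm_apply_apply x
  rwa [show ∀ y : Ioc β (β+1), (AddCircle.equivIoc 1 β).symm y = ((y:ℝ) : AddCircle (1:ℝ)) from fun y => rfl] at this

lemma picoord_coe {u : ℝ} (hu : u ∈ Ioc β (β+1)) : picoord β (u : AddCircle (1:ℝ)) = u := by
  have : (AddCircle.equivIoc 1 β) ((u : ℝ) : AddCircle (1:ℝ)) = ⟨u, hu⟩ := by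
    rw [Equiv.apply_eq_iff_eq_symm_apply]; rfl
  simp [picoord, this]

lemma coe_injOn_Ioc' {u v : ℝ} (hu : u ∈ Ioc β (β+1)) (hv : v ∈ Ioc β (β+1))
    (h : ((u:ℝ) : AddCircle (1:ℝ)) = v) : u = v := by
  have h1 := picoord_coe hu
  rw [h, picoord_coe hv] at h1; exact h1.symm

lemma coe_beta_add_one : ((β + 1 : ℝ) : AddCircle (1:ℝ)) = (β : ℝ) :=
  AddCircle.coe_add_period 1 β

lemma picoord_base : picoord β ((β : ℝ) : AddCircle (1:ℝ)) = β + 1 := by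
  rw [← coe_beta_add_one]; exact picoord_coe ⟨by linarith, le_refl _⟩

lemma coe_ne_base {t : ℝ} (ht : t ∈ Ioo β (β+1)) : ((t:ℝ) : AddCircle (1:ℝ)) ≠ (β:ℝ) := by
  intro h
  have := coe_injOn_Ioc' (Ioo_subset_Ioc_self ht) (⟨by linarith, le_refl _⟩ : β+1 ∈ Ioc β (β+1)) (by rw [h, coe_beta_add_one])
  exact absurd this (by intro h'; rw [h'] at ht; exact lt_irrefl _ ht.2)

lemma picoord_mem_Ioo {x : AddCircle (1:ℝ)} (hx : x ≠ (β:ℝ)) : picoord β x ∈ Ioo β (β+1) := by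
  rcases picoord_mem (β := β) x with ⟨h1, h2⟩
  rcases lt_or_eq_of_le h2 with h | h
  · exact ⟨h1, h⟩
  · exfalso; apply hx
    rw [← coe_picoord (β := β) x, h, coe_beta_add_one]

lemma continuousAt_picoord {x : AddCircle (1:ℝ)} (hx : x ≠ (β:ℝ)) :
    ContinuousAt (picoord β) x :=
  continuous_subtype_val.continuousAt.comp (AddCircle.continuousAt_equivIoc 1 β hx)

lemma continuous_coe_circle : Continuous (fun t : ℝ => ((t:ℝ) : AddCircle (1:ℝ))) :=
  AddCircle.continuous_mk' 1

lemma isOpenMap_coe_circle : IsOpenMap (fun t : ℝ => ((t:ℝ) : AddCircle (1:ℝ))) :=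
  QuotientAddGroup.isOpenMap_coe

/-- limit of a strictly monotone surjection of an open interval at the left endpoint -/
lemma tendsto_strictMonoOn_Ioo {h : ℝ → ℝ} {α ω : ℝ} (hαω : α < ω)
    (hmono : StrictMonoOn h (Ioo α ω)) (hmem : ∀ t ∈ Ioo α ω, h t ∈ Ioo α ω)
    (hsurj : ∀ v ∈ Ioo α ω, ∃ t ∈ Ioo α ω, h t = v) :
    Tendsto h (𝓝[>] α) (𝓝 α) := by
  rw [tendsto_order]
  constructor
  · intro a ha
    filter_upwards [Ioo_mem_nhdsGT_of_mem (left_mem_Ico.2 hαω)] with t ht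
    exact lt_trans ha (hmem t ht).1
  · intro a ha
    obtain ⟨w, hw⟩ : ∃ w, w ∈ Ioo α (min a ω) := by
      apply nonempty_Ioo.2; exact lt_min ha hαω
    obtain ⟨y, hy, hhy⟩ := hsurj w ⟨hw.1, lt_of_lt_of_le hw.2 (min_le_right _ _)⟩
    filter_upwards [Ioo_mem_nhdsGT_of_mem (left_mem_Ico.2 hy.1)] with t ht
    have : h t < h y := hmono ⟨ht.1, lt_trans ht.2 hy.2⟩ hy ht.2
    rw [hhy] at this
    exact lt_trans this (lt_of_lt_of_le hw.2 (min_le_left _ _))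

end helpers

section core
local instance : Fact ((0:ℝ) < 1) := ⟨one_pos⟩

lemma core_arc_lemma (f g : Equiv.Perm (AddCircle (1:ℝ)))
    (hfc : Continuous ⇑f) (hgc : Continuous ⇑g) (hgic : Continuous ⇑(g⁻¹))
    (hrelp : ∀ x, g (f (g⁻¹ x)) = f (f x))
    (hgf_fix : ∃ x, g (f x) = x)
    (b s c : ℝ) (hs : s ∈ Ioo b (b+1)) (hc : c ∈ Ioo b s)
    (hfb : f ((b:ℝ) : AddCircle (1:ℝ)) = ((b:ℝ) : AddCircle (1:ℝ)))
    (hfs : f ((s:ℝ) : AddCircle (1:ℝ)) = ((s:ℝ) : AddCircle (1:ℝ)))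
    (hgb : g ((b:ℝ) : AddCircle (1:ℝ)) = ((s:ℝ) : AddCircle (1:ℝ)))
    (hgs : g ((s:ℝ) : AddCircle (1:ℝ)) = ((b:ℝ) : AddCircle (1:ℝ)))
    (hgr : g ((c:ℝ) : AddCircle (1:ℝ)) = ((c:ℝ) : AddCircle (1:ℝ))) :
    ∃ x : AddCircle (1:ℝ), f x = x ∧ g x = x := by
  have hb1 : (b:ℝ) < b + 1 := by linarith
  have hsIoc : s ∈ Ioc b (b+1) := Ioo_subset_Ioc_self hs
  have hcIoo : c ∈ Ioo b (b+1) := ⟨hc.1, lt_trans hc.2 hs.2⟩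
  have hcIoc : c ∈ Ioc b (b+1) := Ioo_subset_Ioc_self hcIoo
  -- basic ne facts
  have hsb : ((s:ℝ) : AddCircle (1:ℝ)) ≠ ((b:ℝ) : AddCircle (1:ℝ)) := coe_ne_base hs
  have hcb : ((c:ℝ) : AddCircle (1:ℝ)) ≠ ((b:ℝ) : AddCircle (1:ℝ)) := coe_ne_base hcIoo
  have hginvr : g⁻¹ ((c:ℝ) : AddCircle (1:ℝ)) = ((c:ℝ) : AddCircle (1:ℝ)) := by
    conv_lhs => rw [← hgr]
    exact g.symm_apply_apply _
  set e : ℝ → AddCircle (1:ℝ) := fun t => ((t:ℝ) : AddCircle (1:ℝ)) with he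
  set P : ℝ → ℝ := fun t => picoord b (f (e t)) with hP
  set Q : ℝ → ℝ := fun t => picoord b (g (e t)) with hQ
  have hcoeP : ∀ t, e (P t) = f (e t) := fun t => coe_picoord _
  have hcoeQ : ∀ t, e (Q t) = g (e t) := fun t => coe_picoord _
  have hfb' : f (e b) = e b := hfb
  have hfs' : f (e s) = e s := hfs
  have hgb' : g (e b) = e s := hgb
  have hgs' : g (e s) = e b := hgs
  have hgr' : g (e c) = e c := hgr
  have hginvr' : g⁻¹ (e c) = e c := hginvr
  -- f (e t) ≠ e b for t in Ioo
  have hfne : ∀ t ∈ Ioo b (b+1), f (e t) ≠ e b := by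
    intro t ht h
    have h2 : f (e t) = f (e b) := by rw [show f (e b) = e b from hfb]; exact h
    exact coe_ne_base ht (f.injective h2)
  have hPmem : ∀ t ∈ Ioo b (b+1), P t ∈ Ioo b (b+1) := by
    intro t ht
    exact picoord_mem_Ioo (hfne t ht)
  have hPcont : ContinuousOn P (Ioo b (b+1)) := by
    intro t ht
    have hfe : Continuous (fun u : ℝ => f (e u)) := hfc.comp continuous_coe_circle
    have h3 : ContinuousAt (picoord b) (f (e t)) := continuousAt_picoord (hfne t ht)
    exact (ContinuousAt.comp (x := t) h3 hfe.continuousAt).continuousWithinAt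
  have hPinj : InjOn P (Ioo b (b+1)) := by
    intro t ht t' ht' h
    have : f (e t) = f (e t') := by rw [← hcoeP, ← hcoeP, h]
    exact coe_injOn_Ioc' (Ioo_subset_Ioc_self ht) (Ioo_subset_Ioc_self ht') (f.injective this)
  have hPs : P s = s := by
    have : f (e s) = e s := hfs
    rw [hP]; simp only []; rw [this]; exact picoord_coe hsIoc
  -- arcs
  set I : Set (AddCircle (1:ℝ)) := e '' Ioo b s with hI
  set J : Set (AddCircle (1:ℝ)) := e '' Ioo s (b+1) with hJ
  have hIopen : IsOpen I := isOpenMap_coe_circle _ isOpen_Ioo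
  have hJopen : IsOpen J := isOpenMap_coe_circle _ isOpen_Ioo
  have hmemI : ∀ {u : ℝ}, u ∈ Ioo b s → e u ∈ I := fun hu => ⟨_, hu, rfl⟩
  have hIIoc : ∀ {x : AddCircle (1:ℝ)}, x ∈ I → ∃ u ∈ Ioo b s, e u = x := by
    rintro x ⟨u, hu, rfl⟩; exact ⟨u, hu, rfl⟩
  have hJIoc : ∀ {x : AddCircle (1:ℝ)}, x ∈ J → ∃ u ∈ Ioo s (b+1), e u = x := by
    rintro x ⟨u, hu, rfl⟩; exact ⟨u, hu, rfl⟩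
  have hIdisjJ : Disjoint I J := by
    rw [Set.disjoint_left]
    rintro x ⟨u, hu, rfl⟩ ⟨v, hv, hvu⟩
    have : v = u := coe_injOn_Ioc' (⟨lt_trans hs.1 hv.1, hv.2.le⟩)
      (⟨hu.1, le_trans hu.2.le hsIoc.2⟩) hvu
    rw [this] at hv
    exact absurd hu.2 (not_lt.2 hv.1.le)
  have hbI : e b ∉ I := by
    rintro ⟨u, hu, h⟩
    exact coe_ne_base ⟨hu.1, lt_trans hu.2 hs.2⟩ h
  have hbJ : e b ∉ J := by
    rintro ⟨u, hu, h⟩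
    exact coe_ne_base ⟨lt_trans hs.1 hu.1, hu.2⟩ h
  have hsI : e s ∉ I := by
    rintro ⟨u, hu, h⟩
    have : u = s := coe_injOn_Ioc' ⟨hu.1, le_trans hu.2.le hsIoc.2⟩ hsIoc h
    rw [this] at hu; exact lt_irrefl _ hu.2
  have hsJ : e s ∉ J := by
    rintro ⟨u, hu, h⟩
    have : u = s := coe_injOn_Ioc' ⟨lt_trans hs.1 hu.1, hu.2.le⟩ hsIoc h
    rw [this] at hu; exact lt_irrefl _ hu.1
  have hcover : ∀ x : AddCircle (1:ℝ), x = e b ∨ x = e s ∨ x ∈ I ∨ x ∈ J := by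
    intro x
    by_cases h1 : x = e b
    · exact Or.inl h1
    by_cases h2 : x = e s
    · exact Or.inr (Or.inl h2)
    have hmem := picoord_mem_Ioo (β := b) h1
    have hne : picoord b x ≠ s := by
      intro h; apply h2; rw [← coe_picoord (β := b) x, h]
    rcases lt_or_gt_of_ne hne with h | h
    · exact Or.inr (Or.inr (Or.inl ⟨_, ⟨hmem.1, h⟩, coe_picoord x⟩))
    · exact Or.inr (Or.inr (Or.inr ⟨_, ⟨h, hmem.2⟩, coe_picoord x⟩))
  -- g-stability of the arcs
  have hgneb : ∀ x ∈ I, g x ≠ e b := by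
    intro x hx h
    have : x = e s := g.injective (by rw [h, hgs])
    rw [this] at hx; exact hsI hx
  have hgnes : ∀ x ∈ I, g x ≠ e s := by
    intro x hx h
    have : x = e b := g.injective (by rw [h, hgb])
    rw [this] at hx; exact hbI hx
  have hIpre : IsPreconnected I := isPreconnected_Ioo.image e continuous_coe_circle.continuousOn
  have hgII : ∀ x ∈ I, g x ∈ I := by
    have hpre : IsPreconnected (⇑g '' I) := hIpre.image _ hgc.continuousOn
    have hsub : ⇑g '' I ⊆ I ∪ J := by
      rintro y ⟨x, hx, rfl⟩
      rcases hcover (g x) with h | h | h | h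
      · exact absurd h (hgneb x hx)
      · exact absurd h (hgnes x hx)
      · exact Or.inl h
      · exact Or.inr h
    have hne : (⇑g '' I ∩ I).Nonempty := ⟨e c, ⟨e c, hmemI hc, hgr⟩, hmemI hc⟩
    have := hpre.subset_left_of_subset_union hIopen hJopen hIdisjJ hsub hne
    intro x hx; exact this ⟨x, hx, rfl⟩
  have hgiI : ∀ x ∈ I, g⁻¹ x ∈ I := by
    have hpre : IsPreconnected (⇑g⁻¹ '' I) := hIpre.image _ hgic.continuousOn
    have hsub : ⇑g⁻¹ '' I ⊆ I ∪ J := by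
      rintro y ⟨x, hx, rfl⟩
      have h1 : g⁻¹ x ≠ e b := by
        intro h
        have : x = e s := by rw [← hgb', ← h]; exact (g.apply_symm_apply x).symm
        rw [this] at hx; exact hsI hx
      have h2 : g⁻¹ x ≠ e s := by
        intro h
        have : x = e b := by rw [← hgs', ← h]; exact (g.apply_symm_apply x).symm
        rw [this] at hx; exact hbI hx
      rcases hcover (g⁻¹ x) with h | h | h | h
      · exact absurd h h1
      · exact absurd h h2
      · exact Or.inl h
      · exact Or.inr h
    have hne : (⇑g⁻¹ '' I ∩ I).Nonempty :=
      ⟨e c, ⟨e c, hmemI hc, hginvr⟩, hmemI hc⟩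
    have := hpre.subset_left_of_subset_union hIopen hJopen hIdisjJ hsub hne
    intro x hx; exact this ⟨x, hx, rfl⟩
  have hgJJ : ∀ x ∈ J, g x ∈ J := by
    intro x hx
    have h1 : g x ≠ e b := by
      intro h
      have : x = e s := g.injective (by rw [h, hgs])
      rw [this] at hx; exact hsJ hx
    have h2 : g x ≠ e s := by
      intro h
      have : x = e b := g.injective (by rw [h, hgb])
      rw [this] at hx; exact hbJ hx
    rcases hcover (g x) with h | h | h | h
    · exact absurd h h1
    · exact absurd h h2
    · exfalso
      have : x ∈ I := by
        have := hgiI _ h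
        rwa [Equiv.Perm.coe_inv, Equiv.symm_apply_apply] at this
      exact (Set.disjoint_left.1 hIdisjJ this) hx
    · exact h
  -- dichotomy for P
  rcases ContinuousOn.strictMonoOn_of_injOn_Ioo hb1 hPcont hPinj with hPmono | hPanti
  · -- P increasing: main case
    have hfII : ∀ x ∈ I, f x ∈ I := by
      rintro x ⟨u, hu, rfl⟩
      have huIoo : u ∈ Ioo b (b+1) := ⟨hu.1, lt_trans hu.2 hs.2⟩
      have h1 : P u < s := by
        have := hPmono huIoo hs hu.2
        rwa [hPs] at this
      exact ⟨P u, ⟨(hPmem u huIoo).1, h1⟩, hcoeP u⟩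
    have hbs : b < s := lt_trans hc.1 hc.2
    have hQmem : ∀ t ∈ Ioo b s, Q t ∈ Ioo b s := by
      intro t ht
      obtain ⟨v, hv, hev⟩ := hIIoc (hgII _ (hmemI ht))
      have : Q t = v := by
        rw [hQ]; simp only []; rw [← hev]
        exact picoord_coe ⟨hv.1, le_trans hv.2.le hsIoc.2⟩
      rw [this]; exact hv
    have hQcont : ContinuousOn Q (Ioo b s) := by
      intro t ht
      have hne : g (e t) ≠ e b := hgneb _ (hmemI ht)
      have hge : Continuous (fun u : ℝ => g (e u)) := hgc.comp continuous_coe_circle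
      have h3 : ContinuousAt (picoord b) (g (e t)) := continuousAt_picoord hne
      exact (ContinuousAt.comp (x := t) h3 hge.continuousAt).continuousWithinAt
    have hQinj : InjOn Q (Ioo b s) := by
      intro t ht t' ht' h
      have : g (e t) = g (e t') := by rw [← hcoeQ, ← hcoeQ, h]
      exact coe_injOn_Ioc' ⟨ht.1, le_trans ht.2.le hsIoc.2⟩
        ⟨ht'.1, le_trans ht'.2.le hsIoc.2⟩ (g.injective this)
    have hQc : Q c = c := by
      rw [hQ]; simp only []; rw [hgr]; exact picoord_coe hcIoc
    have hQsurj : ∀ v ∈ Ioo b s, ∃ t ∈ Ioo b s, Q t = v := by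
      intro v hv
      obtain ⟨t, ht, het⟩ := hIIoc (hgiI _ (hmemI hv))
      refine ⟨t, ht, ?_⟩
      have : g (e t) = e v := by rw [het]; exact g.apply_symm_apply _
      rw [hQ]; simp only []; rw [this]
      exact picoord_coe ⟨hv.1, le_trans hv.2.le hsIoc.2⟩
    rcases ContinuousOn.strictMonoOn_of_injOn_Ioo hbs hQcont hQinj with hQmono | hQanti
    · exfalso
      have hlim2 : Tendsto Q (𝓝[>] b) (𝓝 b) :=
        tendsto_strictMonoOn_Ioo hbs hQmono hQmem hQsurj
      have hlim1 : Tendsto Q (𝓝[>] b) (𝓝 s) := by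
        have t1 : Tendsto e (𝓝[>] b) (𝓝 (e b)) :=
          (continuous_coe_circle.tendsto b).mono_left nhdsWithin_le_nhds
        have t2 : Tendsto (fun t => g (e t)) (𝓝[>] b) (𝓝 (e s)) := by
          rw [← hgb']; exact (hgc.tendsto _).comp t1
        have t3 : Tendsto Q (𝓝[>] b) (𝓝 (picoord b (e s))) :=
          ((continuousAt_picoord hsb).tendsto).comp t2
        rwa [picoord_coe hsIoc] at t3
      exact absurd (tendsto_nhds_unique hlim2 hlim1) (ne_of_lt hbs)
    · -- Q decreasing : extract the common fixed point
      set ρ := P c with hρdef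
      have hρI : f (e c) ∈ I := hfII _ (hmemI hc)
      have hρ : ρ ∈ Ioo b s := by
        obtain ⟨v, hv, hev⟩ := hIIoc hρI
        have : ρ = v := by
          rw [hρdef, hP]; simp only []; rw [← hev]
          exact picoord_coe ⟨hv.1, le_trans hv.2.le hsIoc.2⟩
        rw [this]; exact hv
      have hρIoo : ρ ∈ Ioo b (b+1) := ⟨hρ.1, lt_trans hρ.2 hs.2⟩
      have hkey : P ρ = Q ρ := by
        have h1 : e (P ρ) = f (f (e c)) := by
          rw [hcoeP]
          congr 1
          exact hcoeP c
        have h2 : e (Q ρ) = f (f (e c)) := by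
          rw [hcoeQ]
          have hh : e ρ = f (e c) := hcoeP c
          rw [hh, ← hrelp (e c), hginvr]
        exact coe_injOn_Ioc' (Ioo_subset_Ioc_self (hPmem ρ hρIoo))
          (Ioo_subset_Ioc_self ⟨(hQmem ρ hρ).1, lt_trans (hQmem ρ hρ).2 hs.2⟩)
          (h1.trans h2.symm)
      rcases lt_trichotomy ρ c with h | h | h
      · exfalso
        have l1 : P ρ < ρ := by
          have := hPmono hρIoo hcIoo h
          rwa [← hρdef] at this
        have l2 : ρ < Q ρ := by
          have := hQanti hρ hc h
          rw [hQc] at this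
          exact lt_trans h this
        rw [hkey] at l1; linarith
      · refine ⟨e c, ?_, hgr⟩
        rw [← hcoeP c, ← hρdef, h]
      · exfalso
        have l1 : ρ < P ρ := by
          have := hPmono hcIoo hρIoo h
          rwa [← hρdef] at this
        have l2 : Q ρ < c := by
          have := hQanti hc hρ h
          rwa [hQc] at this
        rw [hkey] at l1; linarith
  · -- P decreasing: g ∘ f has no fixed point, contradiction
    exfalso
    have hfIJ : ∀ x ∈ I, f x ∈ J := by
      rintro x ⟨u, hu, rfl⟩
      have huIoo : u ∈ Ioo b (b+1) := ⟨hu.1, lt_trans hu.2 hs.2⟩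
      have h1 : s < P u := by
        have := hPanti huIoo hs hu.2
        rwa [hPs] at this
      exact ⟨P u, ⟨h1, (hPmem u huIoo).2⟩, hcoeP u⟩
    have hfJI : ∀ x ∈ J, f x ∈ I := by
      rintro x ⟨u, hu, rfl⟩
      have huIoo : u ∈ Ioo b (b+1) := ⟨lt_trans hs.1 hu.1, hu.2⟩
      have h1 : P u < s := by
        have := hPanti hs huIoo hu.1
        rwa [hPs] at this
      exact ⟨P u, ⟨(hPmem u huIoo).1, h1⟩, hcoeP u⟩
    obtain ⟨x, hx⟩ := hgf_fix
    rcases hcover x with h | h | h | h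
    · rw [h] at hx
      rw [show f (e b) = e b from hfb] at hx
      rw [show g (e b) = e s from hgb] at hx
      exact hsb hx
    · rw [h] at hx
      rw [show f (e s) = e s from hfs] at hx
      rw [show g (e s) = e b from hgs] at hx
      exact hsb hx.symm
    · have : g (f x) ∈ J := hgJJ _ (hfIJ _ h)
      rw [hx] at this
      exact (Set.disjoint_left.1 hIdisjJ h) this
    · have : g (f x) ∈ I := hgII _ (hfJI _ h)
      rw [hx] at this
      exact (Set.disjoint_left.1 hIdisjJ this) h

end core

open MeasureTheory

theorem common_fixed_point_of_conjugation_relation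
    (f g : Equiv.Perm (AddCircle (1 : ℝ)))
    (hfc : Continuous ⇑f) (hgc : Continuous ⇑g)
    (μ : Measure (AddCircle (1 : ℝ))) [IsProbabilityMeasure μ]
    (hinv : ∀ h ∈ Subgroup.closure ({f, g} : Set (Equiv.Perm (AddCircle (1 : ℝ)))),
      Measure.map (⇑h) μ = μ)
    (hrel : g * f * g⁻¹ = f ^ 2)
    (rot : Equiv.Perm (AddCircle (1 : ℝ)) → AddCircle (1 : ℝ))
    (hrot_hom : ∀ h₁ h₂, h₁ ∈ Subgroup.closure ({f, g} : Set (Equiv.Perm (AddCircle (1 : ℝ)))) →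
      h₂ ∈ Subgroup.closure ({f, g} : Set (Equiv.Perm (AddCircle (1 : ℝ)))) →
      rot (h₁ * h₂) = rot h₁ + rot h₂)
    (hrot_fix : ∀ h ∈ Subgroup.closure ({f, g} : Set (Equiv.Perm (AddCircle (1 : ℝ)))),
      (rot h = 0 ↔ ∃ x, h x = x))
    (hg0 : rot g = 0) :
    ∃ x : AddCircle (1 : ℝ), f x = x ∧ g x = x := by
  classical
  haveI : Fact ((0:ℝ) < 1) := ⟨one_pos⟩
  have hfS : f ∈ Subgroup.closure ({f, g} : Set (Equiv.Perm (AddCircle (1 : ℝ)))) :=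
    Subgroup.subset_closure (Set.mem_insert _ _)
  have hgS : g ∈ Subgroup.closure ({f, g} : Set (Equiv.Perm (AddCircle (1 : ℝ)))) :=
    Subgroup.subset_closure (Set.mem_insert_of_mem _ rfl)
  have hone : rot 1 = 0 := by
    have h := hrot_hom 1 1 (one_mem _) (one_mem _)
    rw [mul_one] at h
    exact (left_eq_add.1 h)
  have hginv0 : rot g⁻¹ = 0 := by
    have h := hrot_hom g g⁻¹ hgS (inv_mem hgS)
    rw [mul_inv_cancel, hone, hg0, zero_add] at h
    exact h.symm
  have hf0 : rot f = 0 := by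
    have h1 := hrot_hom (g * f) g⁻¹ (mul_mem hgS hfS) (inv_mem hgS)
    have h2 := hrot_hom g f hgS hfS
    have h3 := hrot_hom f f hfS hfS
    rw [hrel, h2, hg0, hginv0, zero_add, add_zero] at h1
    rw [pow_two, h3] at h1
    exact add_eq_left.1 h1
  obtain ⟨p, hp⟩ := (hrot_fix f hfS).1 hf0
  obtain ⟨r, hr⟩ := (hrot_fix g hgS).1 hg0
  have hgf0 : rot (g * f) = 0 := by rw [hrot_hom g f hgS hfS, hg0, hf0, add_zero]
  obtain ⟨w, hw⟩ := (hrot_fix (g * f) (mul_mem hgS hfS)).1 hgf0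
  have hgf_fix : ∃ x, g (f x) = x := ⟨w, by simpa [Equiv.Perm.mul_apply] using hw⟩
  by_cases hfr : f r = r
  · exact ⟨r, hfr, hr⟩
  have hginvc : Continuous ⇑(g⁻¹) := by
    let gh : AddCircle (1:ℝ) ≃ₜ AddCircle (1:ℝ) := Continuous.homeoOfEquivCompactToT2 (f := g) hgc
    have : ⇑(g⁻¹) = ⇑(gh.symm) := rfl
    rw [this]; exact gh.symm.continuous
  have hrelp : ∀ x, g (f (g⁻¹ x)) = f (f x) := by
    intro x
    have h := congrArg (fun h : Equiv.Perm (AddCircle (1:ℝ)) => h x) hrel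
    simpa [Equiv.Perm.mul_apply, pow_two] using h
  set K : Set (AddCircle (1:ℝ)) := {x | f x = x} with hK
  have hKcl : IsClosed K := isClosed_eq hfc continuous_id
  have hKg : ∀ x, g x ∈ K → x ∈ K := by
    intro x hx
    have h1 := hrelp (g x)
    rw [Equiv.Perm.coe_inv, Equiv.symm_apply_apply] at h1
    have hgx : f (g x) = g x := hx
    rw [hgx, hgx] at h1
    exact g.injective h1
  have hKp : p ∈ K := hp
  set S : ℕ → Set (AddCircle (1:ℝ)) := fun n => (⇑(g^n)) ⁻¹' K with hS
  have hgpowc : ∀ n, Continuous ⇑(g^n) := by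
    intro n; induction n with
    | zero => rw [pow_zero]; simp only [Equiv.Perm.coe_one]; exact continuous_id
    | succ n ih => rw [pow_succ, Equiv.Perm.coe_mul]; exact ih.comp hgc
  have hSchain : ∀ n, S (n+1) ⊆ S n := by
    intro n x hx
    have hx' : (g^(n+1)) x ∈ K := hx
    rw [pow_succ'] at hx'
    have h2 : g ((g^n) x) ∈ K := by simpa [Equiv.Perm.mul_apply] using hx'
    exact hKg _ h2
  have hSne : ∀ n, (S n).Nonempty :=
    fun n => ⟨(g^n)⁻¹ p, show (g^n) ((g^n)⁻¹ p) ∈ K by rw [Equiv.Perm.coe_inv, Equiv.apply_symm_apply]; exact hKp⟩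
  have hScl : ∀ n, IsClosed (S n) := fun n => hKcl.preimage (hgpowc n)
  have hScpt : ∀ n, IsCompact (S n) := fun n => (hScl n).isCompact
  set L : Set (AddCircle (1:ℝ)) := ⋂ n, S n with hLdef
  have hLne : L.Nonempty :=
    IsCompact.nonempty_iInter_of_sequence_nonempty_isCompact_isClosed S hSchain hSne (hScpt 0) hScl
  have hLK : L ⊆ K := by
    have h0 : S 0 = K := by
      ext x; simp [hS]
    exact (Set.iInter_subset S 0).trans (by rw [h0])
  have hLg : ∀ x, x ∈ L ↔ g x ∈ L := by
    intro x
    constructor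
    · intro hx
      refine Set.mem_iInter.2 fun n => ?_
      have hx' : (g^(n+1)) x ∈ K := Set.mem_iInter.1 hx (n+1)
      show (g^n) (g x) ∈ K
      rw [show (g^n) (g x) = (g^(n+1)) x from by rw [pow_succ]; simp [Equiv.Perm.mul_apply]]
      exact hx'
    · intro hx
      refine Set.mem_iInter.2 fun n => ?_
      cases n with
      | zero =>
        show (g^0) x ∈ K
        rw [pow_zero]
        simp only [Equiv.Perm.coe_one, id_eq]
        have h0 : g x ∈ K := by
          have := Set.mem_iInter.1 hx 0
          simpa [hS] using this
        exact hKg x h0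
      | succ m =>
        show (g^(m+1)) x ∈ K
        rw [pow_succ]
        have := Set.mem_iInter.1 hx m
        simpa [Equiv.Perm.mul_apply, hS] using this
  have hrL : r ∉ L := fun h => hfr (hLK h)
  obtain ⟨a, ha⟩ : ∃ a : ℝ, ((a:ℝ) : AddCircle (1:ℝ)) = r := ⟨picoord 0 r, coe_picoord r⟩
  set L' : Set ℝ := picoord a '' L with hL'
  have hLne' : ∀ x ∈ L, x ≠ ((a:ℝ) : AddCircle (1:ℝ)) := by
    intro x hx h
    exact hrL (by rw [← ha, ← h]; exact hx)
  have hL'sub : L' ⊆ Set.Ioo a (a+1) := by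
    rintro t ⟨x, hx, rfl⟩; exact picoord_mem_Ioo (hLne' x hx)
  have hL'coe : ∀ t ∈ L', ((t:ℝ) : AddCircle (1:ℝ)) ∈ L := by
    rintro t ⟨x, hx, rfl⟩; rw [coe_picoord]; exact hx
  have hL'cpt : IsCompact L' := by
    have hLcpt : IsCompact L := (isClosed_iInter hScl).isCompact
    apply hLcpt.image_of_continuousOn
    intro x hx
    exact (continuousAt_picoord (hLne' x hx)).continuousWithinAt
  have hL'ne : L'.Nonempty := hLne.image _
  set Gm : ℝ → ℝ := fun t => picoord a (g ((t:ℝ) : AddCircle (1:ℝ))) with hGm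
  have hcoeGm : ∀ t, ((Gm t : ℝ) : AddCircle (1:ℝ)) = g ((t:ℝ) : AddCircle (1:ℝ)) :=
    fun t => coe_picoord _
  have hGmL : ∀ t ∈ L', Gm t ∈ L' := by
    intro t ht
    exact ⟨g ↑t, (hLg _).1 (hL'coe t ht), rfl⟩
  have hGmsurj : ∀ v ∈ L', ∃ t ∈ L', Gm t = v := by
    intro v hv
    have h1 : g⁻¹ ((v:ℝ) : AddCircle (1:ℝ)) ∈ L := by
      apply (hLg (g⁻¹ ((v:ℝ) : AddCircle (1:ℝ)))).2
      rw [Equiv.Perm.coe_inv, Equiv.apply_symm_apply]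
      exact hL'coe v hv
    refine ⟨picoord a (g⁻¹ ((v:ℝ) : AddCircle (1:ℝ))), ⟨_, h1, rfl⟩, ?_⟩
    rw [hGm]; simp only []
    rw [coe_picoord, Equiv.Perm.coe_inv, Equiv.apply_symm_apply]
    exact picoord_coe (Set.Ioo_subset_Ioc_self (hL'sub hv))
  have hGne : ∀ t ∈ Set.Ioo a (a+1), g ((t:ℝ) : AddCircle (1:ℝ)) ≠ ((a:ℝ) : AddCircle (1:ℝ)) := by
    intro t ht h
    apply coe_ne_base ht
    apply g.injective
    rw [h, ha, hr]
  have hGmem : ∀ t ∈ Set.Ioo a (a+1), Gm t ∈ Set.Ioo a (a+1) :=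
    fun t ht => picoord_mem_Ioo (hGne t ht)
  have hGcont : ContinuousOn Gm (Set.Ioo a (a+1)) := by
    intro t ht
    have hge : Continuous (fun u : ℝ => g ((u:ℝ) : AddCircle (1:ℝ))) :=
      hgc.comp continuous_coe_circle
    have h3 : ContinuousAt (picoord a) (g ((t:ℝ) : AddCircle (1:ℝ))) :=
      continuousAt_picoord (hGne t ht)
    exact (ContinuousAt.comp (x := t) h3 hge.continuousAt).continuousWithinAt
  have hGinj : Set.InjOn Gm (Set.Ioo a (a+1)) := by
    intro t ht t' ht' h
    have h2 : g ((t:ℝ) : AddCircle (1:ℝ)) = g ((t':ℝ) : AddCircle (1:ℝ)) := by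
      rw [← hcoeGm, ← hcoeGm, h]
    exact coe_injOn_Ioc' (Set.Ioo_subset_Ioc_self ht) (Set.Ioo_subset_Ioc_self ht')
      (g.injective h2)
  have hsup : sSup L' ∈ L' := hL'cpt.sSup_mem hL'ne
  have hinf : sInf L' ∈ L' := hL'cpt.sInf_mem hL'ne
  have hbddA : BddAbove L' := hL'cpt.bddAbove
  have hbddB : BddBelow L' := hL'cpt.bddBelow
  rcases ContinuousOn.strictMonoOn_of_injOn_Ioo (by linarith : a < a+1) hGcont hGinj with
    hGmono | hGanti
  · -- Gm increasing : it fixes sSup L'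
    have hfix : Gm (sSup L') = sSup L' := by
      obtain ⟨z, hz, hzv⟩ := hGmsurj (sSup L') hsup
      have hzle : z ≤ sSup L' := le_csSup hbddA hz
      rcases eq_or_lt_of_le hzle with h | h
      · rw [← h]; rw [hzv, h]
      · exfalso
        have h1 : Gm z < Gm (sSup L') := hGmono (hL'sub hz) (hL'sub hsup) h
        rw [hzv] at h1
        exact absurd (le_csSup hbddA (hGmL _ hsup)) (not_le.2 h1)
    refine ⟨((sSup L' : ℝ) : AddCircle (1:ℝ)), hLK (hL'coe _ hsup), ?_⟩
    rw [← hcoeGm, hfix]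
  · -- Gm decreasing : it swaps sSup and sInf of L'
    have hGsup : Gm (sSup L') = sInf L' := by
      refine le_antisymm (le_csInf hL'ne fun v hv => ?_) (csInf_le hbddB (hGmL _ hsup))
      obtain ⟨z, hz, hzv⟩ := hGmsurj v hv
      have hzle : z ≤ sSup L' := le_csSup hbddA hz
      rcases eq_or_lt_of_le hzle with h | h
      · rw [← hzv, h]
      · have := hGanti (hL'sub hz) (hL'sub hsup) h
        rw [hzv] at this
        exact this.le
    have hGinf : Gm (sInf L') = sSup L' := by
      refine le_antisymm (le_csSup hbddA (hGmL _ hinf)) (csSup_le hL'ne fun v hv => ?_)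
      obtain ⟨z, hz, hzv⟩ := hGmsurj v hv
      have hzle : sInf L' ≤ z := csInf_le hbddB hz
      rcases eq_or_lt_of_le hzle with h | h
      · rw [← hzv, ← h]
      · have := hGanti (hL'sub hinf) (hL'sub hz) h
        rw [hzv] at this
        exact this.le
    rcases eq_or_lt_of_le (csInf_le_csSup hL'ne hbddB hbddA) with heq | hlt
    · -- single point : fixed by g
      have hfix : Gm (sSup L') = sSup L' := by rw [hGsup, ← heq]
      refine ⟨((sSup L' : ℝ) : AddCircle (1:ℝ)), hLK (hL'coe _ hsup), ?_⟩
      rw [← hcoeGm, hfix]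
    · -- swap case : apply the core lemma
      have hmIoo := hL'sub hsup
      have hm'Ioo := hL'sub hinf
      apply core_arc_lemma f g hfc hgc hginvc hrelp hgf_fix (sSup L') (sInf L' + 1) (a + 1)
      · exact ⟨by linarith [hmIoo.2, hm'Ioo.1], by linarith⟩
      · exact ⟨hmIoo.2, by linarith [hm'Ioo.1]⟩
      · exact hLK (hL'coe _ hsup)
      · rw [coe_beta_add_one]; exact hLK (hL'coe _ hinf)
      · rw [coe_beta_add_one, ← hGsup]; exact (hcoeGm _).symm
      · rw [coe_beta_add_one, ← hGinf]; exact (hcoeGm _).symm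
      · rw [coe_beta_add_one, ha]; exact hr
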